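/- For k ∈ ℕ, the function u_k(x,y) = (arctan(x/y)/π + 1/2)·Re((x+iy)^k) − (1/π)·log(√(x²+y²))·Im((x+iy)^k) is harmonic on the upper half-plane {(x,y) : y > 0}. -/

import Mathlib

open Real Complex

lemma arg_upper {x y : ℝ} (hy : 0 < y) :
    Complex.arg ((x : ℂ) + y * I) = π / 2 - Real.arctan (x / y) := by
  set z : ℂ := (x : ℂ) + y * I with hz
  have hre : z.re = x := by simp [hz]
  have him : z.im = y := by simp [hz]
  have hz0 : z ≠ 0 := by
    intro h; rw [h] at him; simp at him; linarith
  have habs : ‖z‖ ≠ 0 := by simpa using hz0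
  have harg0 : 0 < Complex.arg z := by
    rcases lt_or_eq_of_le (Complex.arg_nonneg_iff.2 (by rw [him]; exact hy.le)) with h | h
    · exact h
    · exfalso
      have := Complex.arg_eq_zero_iff.1 h.symm
      rw [him] at this; linarith [this.2]
  have hargpi : Complex.arg z < π := by
    refine Complex.arg_lt_pi_iff.2 (Or.inr ?_)
    rw [him]; exact hy.ne'
  have htan : Real.tan (π / 2 - Complex.arg z) = x / y := by
    rw [Real.tan_pi_div_two_sub, Real.tan_eq_sin_div_cos, inv_div,
      Complex.cos_arg hz0, Complex.sin_arg, hre, him]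
    field_simp
  have h1 : -(π / 2) < π / 2 - Complex.arg z := by linarith
  have h2 : π / 2 - Complex.arg z < π / 2 := by linarith
  have := Real.arctan_tan h1 h2
  rw [htan] at this
  linarith [this]

lemma slice_hasDerivAt_h {g : ℂ → ℂ} {z : ℂ} (hg : DifferentiableAt ℂ g z)
    {t y : ℝ} (hzt : z = (t : ℂ) + y * I) :
    HasDerivAt (fun s : ℝ => (g ((s : ℂ) + y * I)).re) ((deriv g z).re) t := by
  have hc : HasDerivAt (fun s : ℝ => (s : ℂ) + y * I) 1 t := by
    simpa using (Complex.ofRealCLM.hasDerivAt (x := t)).add_const ((y : ℂ) * I)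
  have hgz : HasDerivAt g (deriv g z) z := hg.hasDerivAt
  rw [hzt] at hgz
  have := hgz.scomp t hc
  simp only [one_smul] at this
  rw [hzt]
  simpa [Function.comp_def] using (Complex.reCLM.hasFDerivAt.comp_hasDerivAt t this)

lemma slice_hasDerivAt_v {g : ℂ → ℂ} {z : ℂ} (hg : DifferentiableAt ℂ g z)
    {x t : ℝ} (hzt : z = (x : ℂ) + t * I) :
    HasDerivAt (fun s : ℝ => (g ((x : ℂ) + s * I)).re) ((I * deriv g z).re) t := by
  have hc : HasDerivAt (fun s : ℝ => (x : ℂ) + s * I) I t := by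
    simpa using ((Complex.ofRealCLM.hasDerivAt (x := t)).mul_const I).const_add (x : ℂ)
  have hgz : HasDerivAt g (deriv g z) z := hg.hasDerivAt
  rw [hzt] at hgz
  have := hgz.scomp t hc
  simp only [smul_eq_mul] at this
  rw [hzt]
  simpa [Function.comp_def, Complex.I_mul_re] using (Complex.reCLM.hasFDerivAt.comp_hasDerivAt t this)

lemma key_harmonic {F : ℂ → ℂ} {U : Set ℂ} (hU : IsOpen U) (hF : DifferentiableOn ℂ F U)
    {x y : ℝ} (hz : (x : ℂ) + y * I ∈ U) :
    iteratedDeriv 2 (fun t : ℝ => (F ((t : ℂ) + y * I)).re) x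
      + iteratedDeriv 2 (fun t : ℝ => (F ((x : ℂ) + t * I)).re) y = 0 := by
  have hA : AnalyticOnNhd ℂ F U := hF.analyticOnNhd hU
  have hG : AnalyticOnNhd ℂ (deriv F) U := hA.deriv
  set z : ℂ := (x : ℂ) + y * I with hzdef
  -- horizontal second derivative
  have hsh : IsOpen {t : ℝ | (t : ℂ) + y * I ∈ U} :=
    hU.preimage (by continuity)
  have hsv : IsOpen {t : ℝ | (x : ℂ) + t * I ∈ U} :=
    hU.preimage (by continuity)
  have hd1 : deriv (fun t : ℝ => (F ((t : ℂ) + y * I)).re)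
      =ᶠ[nhds x] (fun t : ℝ => (deriv F ((t : ℂ) + y * I)).re) := by
    filter_upwards [hsh.mem_nhds hz] with t ht
    exact (slice_hasDerivAt_h ((hA _ ht).differentiableAt) rfl).deriv
  have hd2 : deriv (deriv (fun t : ℝ => (F ((t : ℂ) + y * I)).re)) x
      = (deriv (deriv F) z).re := by
    rw [hd1.deriv_eq]
    exact (slice_hasDerivAt_h ((hG z hz).differentiableAt) rfl).deriv
  have hv1 : deriv (fun t : ℝ => (F ((x : ℂ) + t * I)).re)
      =ᶠ[nhds y] (fun t : ℝ => ((I * deriv F ((x : ℂ) + t * I)).re)) := by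
    filter_upwards [hsv.mem_nhds hz] with t ht
    exact (slice_hasDerivAt_v ((hA _ ht).differentiableAt) rfl).deriv
  have hIdiff : DifferentiableAt ℂ (fun w => I * deriv F w) z :=
    (differentiableAt_const I).mul ((hG z hz).differentiableAt)
  have hv2 : deriv (deriv (fun t : ℝ => (F ((x : ℂ) + t * I)).re)) y
      = (I * (I * deriv (deriv F) z)).re := by
    rw [hv1.deriv_eq]
    have := slice_hasDerivAt_v hIdiff (rfl : z = (x:ℂ) + y * I)
    rw [deriv_const_mul _ ((hG z hz).differentiableAt)] at this
    exact this.deriv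
  rw [show (2 : ℕ) = 1 + 1 from rfl, iteratedDeriv_succ, iteratedDeriv_one,
    iteratedDeriv_succ, iteratedDeriv_one, hd2, hv2]
  simp [Complex.mul_re, Complex.I_re, Complex.I_im]

noncomputable def Fk (k : ℕ) : ℂ → ℂ := fun z => z ^ k + (I / (π : ℂ)) * (z ^ k * Complex.log z)

lemma Fk_re {k : ℕ} {x y : ℝ} (hy : 0 < y) :
    (Fk k ((x : ℂ) + y * I)).re
      = (Real.arctan (x / y) / π + 1 / 2) * (((x : ℂ) + y * I) ^ k).re
        - (1 / π) * Real.log (Real.sqrt (x ^ 2 + y ^ 2)) * (((x : ℂ) + y * I) ^ k).im := by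
  set z : ℂ := (x : ℂ) + y * I with hzdef
  have habs : ‖z‖ = Real.sqrt (x ^ 2 + y ^ 2) := Complex.norm_add_mul_I x y
  have harg : Complex.arg z = π / 2 - Real.arctan (x / y) := arg_upper hy
  have hlogre : (Complex.log z).re = Real.log (Real.sqrt (x ^ 2 + y ^ 2)) := by
    rw [Complex.log_re, habs]
  have hlogim : (Complex.log z).im = π / 2 - Real.arctan (x / y) := by
    rw [Complex.log_im, harg]
  have hpi : (π : ℝ) ≠ 0 := Real.pi_ne_zero
  have : (I / (π : ℂ)) * (z ^ k * Complex.log z) = (I * (z ^ k * Complex.log z)) / (π : ℂ) := by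
    ring
  rw [Fk, Complex.add_re, this, Complex.div_ofReal_re, Complex.I_mul_re, Complex.mul_im,
    hlogre, hlogim]
  field_simp
  ring

/-- For k ∈ ℕ, u_k(x,y) = (arctan(x/y)/π + 1/2)·Re((x+iy)^k)
− (1/π)·log(√(x²+y²))·Im((x+iy)^k) is harmonic on the upper half-plane. -/
theorem u_k_harmonic (k : ℕ) :
    ∀ x y : ℝ, 0 < y →
      iteratedDeriv 2 (fun t : ℝ =>
        (Real.arctan (t / y) / Real.pi + 1 / 2) * (((t : ℂ) + y * Complex.I) ^ k).re
        - (1 / Real.pi) * Real.log (Real.sqrt (t ^ 2 + y ^ 2))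
            * (((t : ℂ) + y * Complex.I) ^ k).im) x
      + iteratedDeriv 2 (fun t : ℝ =>
        (Real.arctan (x / t) / Real.pi + 1 / 2) * (((x : ℂ) + t * Complex.I) ^ k).re
        - (1 / Real.pi) * Real.log (Real.sqrt (x ^ 2 + t ^ 2))
            * (((x : ℂ) + t * Complex.I) ^ k).im) y
      = 0 := by
  intro x y hy
  have hU : IsOpen {z : ℂ | 0 < z.im} := isOpen_lt continuous_const Complex.continuous_im
  have hF : DifferentiableOn ℂ (Fk k) {z : ℂ | 0 < z.im} := by
    intro z hz
    have hslit : z ∈ Complex.slitPlane := Complex.mem_slitPlane_iff.2 (Or.inr (ne_of_gt hz))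
    exact ((differentiableAt_pow k).add ((differentiableAt_const _).mul
      ((differentiableAt_pow k).mul (Complex.differentiableAt_log hslit)))).differentiableWithinAt
  have hzmem : (x : ℂ) + y * I ∈ {z : ℂ | 0 < z.im} := by
    simp [Set.mem_setOf_eq, hy]
  have harm := key_harmonic hU hF hzmem
  have h1 : (fun t : ℝ =>
      (Real.arctan (t / y) / Real.pi + 1 / 2) * (((t : ℂ) + y * Complex.I) ^ k).re
      - (1 / Real.pi) * Real.log (Real.sqrt (t ^ 2 + y ^ 2))
          * (((t : ℂ) + y * Complex.I) ^ k).im)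
      = (fun t : ℝ => (Fk k ((t : ℂ) + y * I)).re) :=
    funext fun t => (Fk_re hy).symm
  have h2 : iteratedDeriv 2 (fun t : ℝ =>
      (Real.arctan (x / t) / Real.pi + 1 / 2) * (((x : ℂ) + t * Complex.I) ^ k).re
      - (1 / Real.pi) * Real.log (Real.sqrt (x ^ 2 + t ^ 2))
          * (((x : ℂ) + t * Complex.I) ^ k).im) y
      = iteratedDeriv 2 (fun t : ℝ => (Fk k ((x : ℂ) + t * I)).re) y := by
    have hev : (fun t : ℝ =>
        (Real.arctan (x / t) / Real.pi + 1 / 2) * (((x : ℂ) + t * Complex.I) ^ k).re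
        - (1 / Real.pi) * Real.log (Real.sqrt (x ^ 2 + t ^ 2))
            * (((x : ℂ) + t * Complex.I) ^ k).im)
        =ᶠ[nhds y] (fun t : ℝ => (Fk k ((x : ℂ) + t * I)).re) := by
      filter_upwards [lt_mem_nhds hy] with t ht
      exact (Fk_re ht).symm
    rw [show (2 : ℕ) = 1 + 1 from rfl, iteratedDeriv_succ, iteratedDeriv_one,
      iteratedDeriv_succ, iteratedDeriv_one]
    exact (hev.deriv).deriv_eq
  rw [h1, h2]
  exact harm
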